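/- Let C be a neighbour-transitive code (|C| ≥ 2) in the odd graph O_{k+1} = K(2k+1,k) with minimum distance δ = 1, and suppose Aut(C) preserves a partition of Ω into a blocks each of size b with ab = 2k+1, a,b ≥ 2, acting transitively on the blocks. Then for every α ∈ C the multiset of block intersection sizes {|α ∩ Bᵢ|} is either {(b−1)/2 with multiplicity (a+1)/2, (b+1)/2 with multiplicity (a−1)/2} or {0 with multiplicity (a−1)/2, (b−1)/2 with multiplicity 1, b with multiplicity (a−1)/2}. -/

import Mathlib

open Finset

abbrev KVert (Ω : Type*) [DecidableEq Ω] (k : ℕ) := {s : Finset Ω // s.card = k}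

def kneser (Ω : Type*) [DecidableEq Ω] (k : ℕ) : SimpleGraph (KVert Ω k) where
  Adj a b := a ≠ b ∧ Disjoint a.1 b.1
  symm := ⟨fun a b h => ⟨h.1.symm, h.2.symm⟩⟩
  loopless := ⟨fun a h => h.1 rfl⟩

/-- The action of a permutation of `Ω` on the vertices of the Kneser graph. -/
def permV {Ω : Type*} [DecidableEq Ω] {k : ℕ} (g : Equiv.Perm Ω) (a : KVert Ω k) : KVert Ω k :=
  ⟨a.1.map g.toEmbedding, by simp [a.2]⟩

/-- The setwise stabiliser of a code `C` inside `Sym(Ω)`. -/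
def autC {Ω : Type*} [DecidableEq Ω] {k : ℕ} (C : Set (KVert Ω k)) : Set (Equiv.Perm Ω) :=
  {g | (permV g) '' C = C}

/-- `nbrs C i` is `Cᵢ`, the set of vertices at distance exactly `i` from the code `C`. -/
def nbrs {Ω : Type*} [Fintype Ω] [DecidableEq Ω] {k : ℕ} (C : Set (KVert Ω k)) (i : ℕ) :
    Set (KVert Ω k) :=
  {γ | (∃ α ∈ C, (kneser Ω k).dist α γ = i) ∧ ∀ β ∈ C, i ≤ (kneser Ω k).dist β γ}

/-- `G` acts transitively on the set of vertices `S`. -/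
def transOn {Ω : Type*} [DecidableEq Ω] {k : ℕ} (G : Set (Equiv.Perm Ω))
    (S : Set (KVert Ω k)) : Prop :=
  ∀ x ∈ S, ∀ y ∈ S, ∃ g ∈ G, permV g x = y


lemma decomp2 {u : ℕ} (hu : u ≠ 0) (S : Multiset ℕ) (h : ∀ x ∈ S, x = u ∨ x = 0) :
    S = Multiset.replicate (S.count u) u + Multiset.replicate (S.count 0) 0 := by
  ext x
  simp only [Multiset.count_add, Multiset.count_replicate]
  by_cases h1 : x = u
  · subst h1; simp [hu, Ne.symm hu]
  · by_cases h2 : x = 0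
    · subst h2; simp [hu, Ne.symm hu]
    · have hx : x ∉ S := fun hx => by rcases h x hx with h' | h' <;> exact absurd h' ‹_›
      simp [Multiset.count_eq_zero_of_notMem hx, h1, h2,
        show u ≠ x from fun h' => h1 h'.symm, show (0:ℕ) ≠ x from fun h' => h2 h'.symm]

lemma decomp3 {u v : ℕ} (huv : u ≠ v) (hu : u ≠ 0) (hv : v ≠ 0) (S : Multiset ℕ)
    (h : ∀ x ∈ S, x = u ∨ x = v ∨ x = 0) :
    S = Multiset.replicate (S.count u) u + Multiset.replicate (S.count v) v +
        Multiset.replicate (S.count 0) 0 := by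
  ext x
  simp only [Multiset.count_add, Multiset.count_replicate]
  by_cases h1 : x = u
  · subst h1; simp [huv, Ne.symm huv, hu, Ne.symm hu]
  · by_cases h2 : x = v
    · subst h2; simp [huv, Ne.symm huv, hv, Ne.symm hv]
    · by_cases h3 : x = 0
      · subst h3; simp [hu, Ne.symm hu, hv, Ne.symm hv]
      · have hx : x ∉ S := fun hx => by rcases h x hx with h' | h' | h' <;> exact absurd h' ‹_›
        simp [Multiset.count_eq_zero_of_notMem hx, h1, h2, h3,
          show u ≠ x from fun h' => h1 h'.symm, show v ≠ x from fun h' => h2 h'.symm,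
          show (0:ℕ) ≠ x from fun h' => h3 h'.symm]


set_option maxHeartbeats 2000000 in
lemma caseA_arith {a b k s r u : ℕ} (hbo : b % 2 = 1) (ha3 : 3 ≤ a) (hb3 : 3 ≤ b)
    (hab : a * b = 2 * k + 1) (hu0 : 0 < u) (hub : u ≤ b) (hs1 : 1 ≤ s)
    (hcard : s + r = a) (hsum : s * u = k + 1)
    (hE' : ∀ x : ℕ, (if u = x then s else 0) + (if 0 = x then r else 0)
        - (if x = u then 1 else 0) + (if x = u - 1 then 1 else 0)
        = (if b - u = x then s else 0) + (if b = x then r else 0)) : False := by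
  by_cases hub' : u = b
  · have E0 : r = s := by have h := hE' 0; split_ifs at h <;> omega
    have Eb : s = r + 1 := by have h := hE' b; split_ifs at h <;> omega
    omega
  · have Eb : r = 0 := by have h := hE' b; split_ifs at h <;> omega
    have hs' : s = a := by omega
    have h2 : a * (2 * u) = a * b + 1 := by
      calc a * (2 * u) = 2 * (a * u) := by ring
        _ = 2 * (s * u) := by rw [hs']
        _ = a * b + 1 := by omega
    have hdvd : a ∣ 1 := by
      have h5 := Nat.dvd_sub (dvd_mul_right a (2 * u)) (dvd_mul_right a b)
      rw [h2, Nat.add_sub_cancel_left] at h5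
      exact h5
    have := Nat.le_of_dvd one_pos hdvd
    omega

set_option maxHeartbeats 4000000 in
lemma caseB_arith {a b s t r u v : ℕ} (hbo : b % 2 = 1)
    (ha3 : 3 ≤ a) (hb3 : 3 ≤ b)
    (hu0 : 0 < u) (hub : u ≤ b) (hv0 : 0 < v) (hvb : v ≤ b) (huv : v ≠ u)
    (hs1 : 1 ≤ s) (ht1 : 1 ≤ t) (hcard : s + t + r = a)
    (hE' : ∀ x : ℕ, (if u = x then s else 0) + (if v = x then t else 0)
        + (if 0 = x then r else 0) - (if x = u then 1 else 0) + (if x = u - 1 then 1 else 0)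
        = (if b - u = x then s else 0) + (if b - v = x then t else 0)
          + (if b = x then r else 0)) :
    (r = 0 ∧ v = b - u ∧ u = v + 1 ∧ s = t + 1) ∨
    (v = b ∧ s = 1 ∧ t = r ∧ 2 * u = b + 1) := by
  by_cases hub' : u = b
  · by_cases hvb' : v = b
    · omega
    · exfalso
      have E0 : r = s := by have h := hE' 0; split_ifs at h <;> omega
      have Eb : s = r + 1 := by have h := hE' b; split_ifs at h <;> omega
      omega
  · by_cases hvb' : v = b
    · have Eb : t = r := by have h := hE' b; split_ifs at h <;> omega
      have E0 : (u = 1 ∧ 1 + r = t) ∨ (¬ u = 1 ∧ r = t) := by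
        have h := hE' 0; split_ifs at h <;> omega
      have hu2 : 2 ≤ u := by rcases E0 with ⟨_, h⟩ | ⟨h, _⟩ <;> omega
      have Eu : s = 1 := by have h := hE' u; split_ifs at h <;> omega
      have Eu1 : 2 * u = b + 1 := by have h := hE' (u - 1); split_ifs at h <;> omega
      exact Or.inr ⟨hvb', Eu, Eb, Eu1⟩
    · have Eb : r = 0 := by have h := hE' b; split_ifs at h <;> omega
      have Ev : v = b - u ∧ ((v = u - 1 ∧ 1 + t = s) ∨ (¬ v = u - 1 ∧ t = s)) := by
        have h := hE' v; split_ifs at h <;> omega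
      obtain ⟨Ev1, Ev2⟩ := Ev
      have Eu : s = t + 1 := by have h := hE' u; split_ifs at h <;> omega
      have huv1 : u = v + 1 := by rcases Ev2 with ⟨h1, h2⟩ | ⟨h1, h2⟩ <;> omega
      exact Or.inl ⟨Eb, Ev1, huv1, Eu⟩

set_option maxHeartbeats 1000000 in
lemma core {a b k : ℕ} (hao : a % 2 = 1) (hbo : b % 2 = 1) (ha3 : 3 ≤ a) (hb3 : 3 ≤ b)
    (hab : a * b = 2 * k + 1) (W M : Multiset ℕ)
    (hWcard : Multiset.card W = a)
    (hWle : ∀ x ∈ W, x ≤ b)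
    (hMdef : M = W.map (b - ·))
    (hWsum : W.sum = k + 1)
    (H1 : ∃ v ∈ W, 0 < v ∧ (v - 1) ::ₘ W.erase v = M)
    (H2 : ∀ v ∈ W, ∀ v' ∈ W, 0 < v → 0 < v' → (v - 1) ::ₘ W.erase v ≠ M →
      (v' - 1) ::ₘ W.erase v' ≠ M → (v - 1) ::ₘ W.erase v = (v' - 1) ::ₘ W.erase v') :
    M = Multiset.replicate ((a + 1) / 2) ((b - 1) / 2) +
        Multiset.replicate ((a - 1) / 2) ((b + 1) / 2) ∨
    M = Multiset.replicate ((a - 1) / 2) 0 + {(b - 1) / 2} +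
        Multiset.replicate ((a - 1) / 2) b := by
  obtain ⟨u, huW, hu0, heq⟩ := H1
  have hub : u ≤ b := hWle u huW
  have inj : ∀ x ∈ W, ∀ y ∈ W, 0 < x → 0 < y →
      (x - 1) ::ₘ W.erase x = (y - 1) ::ₘ W.erase y → x = y := by
    intro x hx y hy hx0 hy0 hN
    by_contra hne
    have h := congrArg (Multiset.count x) hN
    rw [Multiset.count_cons, Multiset.count_cons, Multiset.count_erase_self,
      Multiset.count_erase_of_ne hne] at h
    have hcx : 0 < Multiset.count x W := Multiset.count_pos.mpr hx
    split_ifs at h <;> omega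
  by_cases hA : ∀ x ∈ W, x = u ∨ x = 0
  · -- Case A : leads to a contradiction
    exfalso
    set s := W.count u with hs
    set r := W.count 0 with hr
    have hdec : W = Multiset.replicate s u + Multiset.replicate r 0 := decomp2 (by omega) W hA
    have hs1 : 1 ≤ s := Multiset.count_pos.mpr huW
    rw [hdec] at hWcard hWsum
    simp only [Multiset.card_add, Multiset.card_replicate] at hWcard
    simp only [Multiset.sum_add, Multiset.sum_replicate, smul_eq_mul, Nat.mul_zero,
      add_zero] at hWsum
    have hMdec : M = Multiset.replicate s (b - u) + Multiset.replicate r b := by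
      rw [hMdef, hdec]; simp [Multiset.map_replicate]
    have hE' : ∀ x : ℕ, (if u = x then s else 0) + (if 0 = x then r else 0)
        - (if x = u then 1 else 0) + (if x = u - 1 then 1 else 0)
        = (if b - u = x then s else 0) + (if b = x then r else 0) := by
      intro x
      have h := congrArg (Multiset.count x) heq
      rw [Multiset.count_cons] at h
      have he : Multiset.count x (W.erase u) = Multiset.count x W - (if x = u then 1 else 0) := by
        by_cases hxu : x = u
        · subst hxu; simp [Multiset.count_erase_self]
        · simp [Multiset.count_erase_of_ne hxu, hxu]
      rw [he] at h
      rw [hdec, hMdec] at h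
      simp only [Multiset.count_add, Multiset.count_replicate] at h
      exact h
    exact caseA_arith hbo ha3 hb3 hab hu0 hub hs1 hWcard hWsum hE'
  · push_neg at hA
    obtain ⟨v, hvW, huv, hv0⟩ := hA
    have hvb : v ≤ b := hWle v hvW
    have hvM : (v - 1) ::ₘ W.erase v ≠ M := fun hc =>
      huv (inj v hvW u huW (by omega) hu0 (hc.trans heq.symm))
    have hall : ∀ x ∈ W, x = u ∨ x = v ∨ x = 0 := by
      intro x hx
      by_cases h1 : x = u
      · exact Or.inl h1
      by_cases h2 : x = 0
      · exact Or.inr (Or.inr h2)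
      refine Or.inr (Or.inl ?_)
      have hxM : (x - 1) ::ₘ W.erase x ≠ M := fun hc =>
        h1 (inj x hx u huW (by omega) hu0 (hc.trans heq.symm))
      exact inj x hx v hvW (by omega) (by omega)
        (H2 x hx v hvW (by omega) (by omega) hxM hvM)
    set s := W.count u with hs
    set t := W.count v with ht
    set r := W.count 0 with hr
    have hdec : W = Multiset.replicate s u + Multiset.replicate t v +
        Multiset.replicate r 0 := decomp3 (fun h => huv h.symm) (by omega) hv0 W hall
    have hs1 : 1 ≤ s := Multiset.count_pos.mpr huW
    have ht1 : 1 ≤ t := Multiset.count_pos.mpr hvW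
    rw [hdec] at hWcard
    simp only [Multiset.card_add, Multiset.card_replicate] at hWcard
    have hMdec : M = Multiset.replicate s (b - u) + Multiset.replicate t (b - v) +
        Multiset.replicate r b := by
      rw [hMdef, hdec]; simp [Multiset.map_replicate]
    have hE' : ∀ x : ℕ, (if u = x then s else 0) + (if v = x then t else 0)
        + (if 0 = x then r else 0) - (if x = u then 1 else 0) + (if x = u - 1 then 1 else 0)
        = (if b - u = x then s else 0) + (if b - v = x then t else 0)
          + (if b = x then r else 0) := by
      intro x
      have h := congrArg (Multiset.count x) heq
      rw [Multiset.count_cons] at h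
      have he : Multiset.count x (W.erase u) = Multiset.count x W - (if x = u then 1 else 0) := by
        by_cases hxu : x = u
        · subst hxu; simp [Multiset.count_erase_self]
        · simp [Multiset.count_erase_of_ne hxu, hxu]
      rw [he] at h
      rw [hdec, hMdec] at h
      simp only [Multiset.count_add, Multiset.count_replicate] at h
      exact h
    rcases caseB_arith hbo ha3 hb3 hu0 hub (by omega) hvb huv hs1 ht1 hWcard hE' with
      ⟨Eb, Ev1, huv1, Eu⟩ | ⟨hvb', Eu, Eb, Eu1⟩
    · left
      rw [hMdec, show r = 0 from Eb]
      simp only [Multiset.replicate_zero, add_zero]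
      rw [show b - u = (b - 1) / 2 by omega, show b - v = (b + 1) / 2 by omega,
        show s = (a + 1) / 2 by omega, show t = (a - 1) / 2 by omega]
    · right
      rw [hMdec, show b - v = 0 by omega, show b - u = (b - 1) / 2 by omega,
        show s = 1 from Eu, show t = (a - 1) / 2 by omega, show r = (a - 1) / 2 by omega]
      rw [Multiset.replicate_one]
      congr 1
      rw [add_comm]


lemma kneser_adj_of_disjoint {Ω : Type*} [DecidableEq Ω] {k : ℕ} (hk : 0 < k)
    {x y : KVert Ω k} (h : Disjoint x.1 y.1) : (kneser Ω k).Adj x y := by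
  refine And.intro (fun he => ?_) h
  subst he
  rw [disjoint_self] at h
  have := x.2
  rw [h] at this
  simp at this
  omega

lemma kreach {Ω : Type*} [Fintype Ω] [DecidableEq Ω] {k : ℕ}
    (hcard : Fintype.card Ω = 2 * k + 1) (hk : 1 ≤ k) :
    ∀ α β : KVert Ω k, (kneser Ω k).Reachable α β := by
  suffices h : ∀ j (α β : KVert Ω k), k ≤ (α.1 ∩ β.1).card + j →
      (kneser Ω k).Reachable α β by
    intro α β
    exact h k α β (by omega)
  intro j
  induction j with
  | zero =>
    intro α β hle
    have h1 : α.1 ∩ β.1 = α.1 :=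
      Finset.eq_of_subset_of_card_le inter_subset_left (by rw [α.2]; omega)
    have hsub : α.1 ⊆ β.1 := by rw [← h1]; exact inter_subset_right
    have h2 : α.1 = β.1 :=
      Finset.eq_of_subset_of_card_le hsub (by rw [α.2, β.2])
    exact (Subtype.ext h2) ▸ SimpleGraph.Reachable.refl α
  | succ j ih =>
    intro α β hle
    by_cases hab : α = β
    · exact hab ▸ SimpleGraph.Reachable.refl α
    have hne : α.1 ≠ β.1 := fun h => hab (Subtype.ext h)
    have hpne : (α.1 \ β.1).Nonempty := by
      rw [Finset.sdiff_nonempty]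
      intro hsub
      exact hne (Finset.eq_of_subset_of_card_le hsub (by rw [α.2, β.2]))
    obtain ⟨p, hp⟩ := hpne
    rw [Finset.mem_sdiff] at hp
    have hqne : (β.1 \ α.1).Nonempty := by
      rw [Finset.sdiff_nonempty]
      intro hsub
      exact hne (Finset.eq_of_subset_of_card_le hsub (by rw [α.2, β.2])).symm
    obtain ⟨q, hq⟩ := hqne
    rw [Finset.mem_sdiff] at hq
    have hcompl : (Finset.univ \ β.1).card = k + 1 := by
      rw [Finset.card_sdiff_of_subset (Finset.subset_univ _), Finset.card_univ, hcard, β.2]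
      omega
    have hpmem : p ∈ Finset.univ \ β.1 := Finset.mem_sdiff.mpr ⟨Finset.mem_univ _, hp.2⟩
    have hγcard : ((Finset.univ \ β.1).erase p).card = k := by
      rw [Finset.card_erase_of_mem hpmem, hcompl]
      omega
    set γf := (Finset.univ \ β.1).erase p with hγf
    let γ : KVert Ω k := ⟨γf, hγcard⟩
    have hdisjβγ : Disjoint β.1 γf := by
      rw [Finset.disjoint_left]
      intro x hx hxγ
      have := (Finset.erase_subset _ _) hxγ
      rw [Finset.mem_sdiff] at this
      exact this.2 hx
    have hβ'card : (insert p (β.1.erase q)).card = k := by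
      rw [Finset.card_insert_of_notMem (fun h => hp.2 (Finset.erase_subset _ _ h)),
        Finset.card_erase_of_mem hq.1, β.2]
      omega
    set β'f := insert p (β.1.erase q) with hβ'f
    let β' : KVert Ω k := ⟨β'f, hβ'card⟩
    have hdisjγβ' : Disjoint γf β'f := by
      rw [Finset.disjoint_right]
      intro x hx
      rw [hβ'f, Finset.mem_insert] at hx
      rcases hx with rfl | hx
      · exact Finset.notMem_erase _ _
      · intro hxγ
        have := (Finset.erase_subset _ _) hxγ
        rw [Finset.mem_sdiff] at this
        exact this.2 (Finset.erase_subset _ _ hx)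
    have hinter : (α.1 ∩ β'f).card = (α.1 ∩ β.1).card + 1 := by
      have h1 : α.1 ∩ β'f = insert p (α.1 ∩ β.1) := by
        ext x
        simp only [hβ'f, Finset.mem_inter, Finset.mem_insert, Finset.mem_erase]
        constructor
        · rintro ⟨hxα, rfl | ⟨hxq, hxβ⟩⟩
          · exact Or.inl rfl
          · exact Or.inr ⟨hxα, hxβ⟩
        · rintro (rfl | ⟨hxα, hxβ⟩)
          · exact ⟨hp.1, Or.inl rfl⟩
          · exact ⟨hxα, Or.inr ⟨fun h => hq.2 (h ▸ hxα), hxβ⟩⟩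
      rw [h1, Finset.card_insert_of_notMem (fun h => hp.2 (Finset.mem_inter.mp h).2)]
    have hinter' : (α.1 ∩ β'.1).card = (α.1 ∩ β.1).card + 1 := hinter
    have hreach : (kneser Ω k).Reachable α β' := ih α β' (by omega)
    have adj1 : (kneser Ω k).Adj β' γ := kneser_adj_of_disjoint (by omega) hdisjγβ'.symm
    have adj2 : (kneser Ω k).Adj γ β := kneser_adj_of_disjoint (by omega) hdisjβγ.symm
    exact hreach.trans (adj1.reachable.trans adj2.reachable)



lemma mem_nbrs1 {Ω : Type*} [Fintype Ω] [DecidableEq Ω] {k : ℕ}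
    (hcard : Fintype.card Ω = 2 * k + 1) (hk : 1 ≤ k) (C : Set (KVert Ω k))
    {γ : KVert Ω k} (hγ : γ ∉ C) {α : KVert Ω k} (hα : α ∈ C)
    (hadj : (kneser Ω k).Adj α γ) : γ ∈ nbrs C 1 := by
  refine ⟨⟨α, hα, (SimpleGraph.dist_eq_one_iff_adj).mpr hadj⟩, fun β hβ => ?_⟩
  rw [Nat.one_le_iff_ne_zero, SimpleGraph.dist_ne_zero_iff_ne_and_reachable]
  exact ⟨fun h => hγ (h ▸ hβ), kreach hcard hk β γ⟩

lemma permV_memC {Ω : Type*} [DecidableEq Ω] {k : ℕ} {C : Set (KVert Ω k)}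
    {g : Equiv.Perm Ω} (hg : g ∈ autC C) {x : KVert Ω k} (hx : x ∈ C) : permV g x ∈ C := by
  rw [← hg]; exact Set.mem_image_of_mem _ hx

/-- The multiset of block intersection sizes is invariant under elements of `autC C`. -/
lemma minv {Ω : Type*} [Fintype Ω] [DecidableEq Ω] {k a b : ℕ}
    (hb : 2 ≤ b)
    (B : Fin a → Finset Ω) (hBcard : ∀ i, (B i).card = b)
    (hBdisj : ∀ i j, i ≠ j → Disjoint (B i) (B j))
    {g : Equiv.Perm Ω}
    (hpres : ∀ i, ∃ j, (B i).map g.toEmbedding = B j)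
    (x : KVert Ω k) :
    (Finset.univ.val.map fun i => ((permV g x).1 ∩ B i).card) =
      Finset.univ.val.map fun i => (x.1 ∩ B i).card := by
  choose f hf using hpres
  have hinj : Function.Injective f := by
    intro i j hij
    by_contra hne
    have h1 : B i = B j := Finset.map_injective g.toEmbedding (by rw [hf i, hf j, hij])
    have h2 := hBdisj i j hne
    rw [h1, disjoint_self] at h2
    have := hBcard j
    rw [h2] at this
    simp at this
    omega
  have hbij : Function.Bijective f := Finite.injective_iff_bijective.mp hinj
  let e : Fin a ≃ Fin a := Equiv.ofBijective f hbij
  have key : ∀ i, ((permV g x).1 ∩ B (f i)).card = (x.1 ∩ B i).card := by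
    intro i
    have h1 : (permV g x).1 ∩ B (f i) = (x.1 ∩ B i).map g.toEmbedding := by
      rw [← hf i]
      exact (Finset.map_inter _ _).symm
    rw [h1, Finset.card_map]
  calc (Finset.univ.val.map fun i => ((permV g x).1 ∩ B i).card)
      = ((Finset.univ.map e.toEmbedding).val.map fun i => ((permV g x).1 ∩ B i).card) := by
        rw [Finset.map_univ_equiv]
    _ = (Finset.univ.val.map fun i => ((permV g x).1 ∩ B (e i)).card) := by
        rw [Finset.map_val, Multiset.map_map]
        rfl
    _ = Finset.univ.val.map fun i => (x.1 ∩ B i).card := by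
        apply Multiset.map_congr rfl
        intro i _
        exact key i

lemma permV_adj {Ω : Type*} [DecidableEq Ω] {k : ℕ} {g : Equiv.Perm Ω} {x y : KVert Ω k}
    (h : (kneser Ω k).Adj x y) : (kneser Ω k).Adj (permV g x) (permV g y) := by
  refine And.intro (fun he => And.left h ?_) (by simpa [permV, Finset.disjoint_map] using And.right h)
  have := congrArg Subtype.val he
  simp only [permV] at this
  exact Subtype.ext (Finset.map_injective g.toEmbedding this)

lemma nbr_multiset {Ω : Type*} [Fintype Ω] [DecidableEq Ω] {a b : ℕ}
    (B : Fin a → Finset Ω) (hBcard : ∀ i, (B i).card = b)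
    (hBdisj : ∀ i j, i ≠ j → Disjoint (B i) (B j))
    (A : Finset Ω) (i : Fin a) (y : Ω) (hyB : y ∈ B i) (hyA : y ∉ A) :
    (Finset.univ.val.map fun j => ((((Finset.univ \ A).erase y) ∩ B j)).card) =
      ((b - (A ∩ B i).card) - 1) ::ₘ
        (Finset.univ.val.map fun j => b - (A ∩ B j).card).erase (b - (A ∩ B i).card) := by
  have hcardsd : ∀ j, (B j \ A).card = b - (A ∩ B j).card := by
    intro j
    have h1 := Finset.card_sdiff_add_card_inter (B j) A
    rw [Finset.inter_comm, hBcard j] at h1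
    omega
  have hne : ∀ j, j ≠ i → ((Finset.univ \ A).erase y) ∩ B j = B j \ A := by
    intro j hj
    ext x
    simp only [Finset.mem_inter, Finset.mem_erase, Finset.mem_sdiff, Finset.mem_univ, true_and]
    constructor
    · rintro ⟨⟨_, hxA⟩, hxB⟩; exact ⟨hxB, hxA⟩
    · rintro ⟨hxB, hxA⟩
      refine ⟨⟨fun hxy => ?_, hxA⟩, hxB⟩
      subst hxy
      exact (Finset.disjoint_left.mp (hBdisj j i hj)) hxB hyB
  have heqi : ((Finset.univ \ A).erase y) ∩ B i = (B i \ A).erase y := by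
    ext x
    simp only [Finset.mem_inter, Finset.mem_erase, Finset.mem_sdiff, Finset.mem_univ, true_and]
    tauto
  have huniv : (Finset.univ.val : Multiset (Fin a)) = i ::ₘ Finset.univ.val.erase i :=
    (Multiset.cons_erase (Finset.mem_val.mpr (Finset.mem_univ i))).symm
  have hW : (Finset.univ.val.map fun j => b - (A ∩ B j).card)
      = (b - (A ∩ B i).card) ::ₘ ((Finset.univ.val.erase i).map fun j => b - (A ∩ B j).card) := by
    conv_lhs => rw [huniv]
    rw [Multiset.map_cons]
  rw [hW, Multiset.erase_cons_head]
  conv_lhs => rw [huniv]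
  rw [Multiset.map_cons]
  congr 1
  · rw [heqi, Finset.card_erase_of_mem (Finset.mem_sdiff.mpr ⟨hyB, hyA⟩), hcardsd i]
  · apply Multiset.map_congr rfl
    intro j hj
    have hji : j ≠ i := by
      intro h
      subst h
      exact (Finset.univ.nodup.notMem_erase) hj
    rw [hne j hji, hcardsd j]

/-- imprimitive case, minimum distance 1: the multiset of block
intersection sizes of every codeword is one of two explicit multisets. -/
theorem stmt9 {Ω : Type*} [Fintype Ω] [DecidableEq Ω] {k a b : ℕ}
    (hcard : Fintype.card Ω = 2 * k + 1)
    (ha : 2 ≤ a) (hb : 2 ≤ b) (hab : a * b = 2 * k + 1)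
    (B : Fin a → Finset Ω) (hBcard : ∀ i, (B i).card = b)
    (hBdisj : ∀ i j, i ≠ j → Disjoint (B i) (B j))
    (hBcover : Finset.univ.biUnion B = Finset.univ)
    (C : Set (KVert Ω k)) (hC : C.Nontrivial)
    (h0 : transOn (autC C) C) (h1 : transOn (autC C) (nbrs C 1))
    (hdelta : ∃ α ∈ C, ∃ β ∈ C, (kneser Ω k).Adj α β)
    (hpres : ∀ g ∈ autC C, ∀ i, ∃ j, (B i).map g.toEmbedding = B j)
    (hblocktrans : ∀ i j, ∃ g ∈ autC C, (B i).map g.toEmbedding = B j) :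
    (∀ α ∈ C, (Finset.univ.val.map fun i => (α.1 ∩ B i).card) =
        Multiset.replicate ((a + 1) / 2) ((b - 1) / 2) +
          Multiset.replicate ((a - 1) / 2) ((b + 1) / 2)) ∨
    (∀ α ∈ C, (Finset.univ.val.map fun i => (α.1 ∩ B i).card) =
        Multiset.replicate ((a - 1) / 2) 0 + {(b - 1) / 2} +
          Multiset.replicate ((a - 1) / 2) b) := by
  classical
  have hk2 : 2 ≤ k := by
    have h4 : 2 * 2 ≤ a * b := Nat.mul_le_mul ha hb
    omega
  have hmod : a % 2 * (b % 2) % 2 = 1 := by rw [← Nat.mul_mod]; omega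
  have haodd : a % 2 = 1 := by
    rcases Nat.mod_two_eq_zero_or_one a with h | h
    · rw [h] at hmod; simp at hmod
    · exact h
  have hbodd : b % 2 = 1 := by
    rcases Nat.mod_two_eq_zero_or_one b with h | h
    · rw [h] at hmod; simp at hmod
    · exact h
  obtain ⟨α₀, hα₀⟩ := hC.nonempty
  set m : Fin a → ℕ := fun i => (α₀.1 ∩ B i).card with hm
  have hmle : ∀ i, m i ≤ b := fun i => by
    rw [← hBcard i]; exact Finset.card_le_card Finset.inter_subset_right
  set W : Multiset ℕ := Finset.univ.val.map (fun i => b - m i) with hW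
  set M : Multiset ℕ := Finset.univ.val.map m with hMs
  -- every codeword has block multiset M
  have msC : ∀ α ∈ C, (Finset.univ.val.map fun i => (α.1 ∩ B i).card) = M := by
    intro α hα
    obtain ⟨g, hg, hgα⟩ := h0 α₀ hα₀ α hα
    rw [← hgα]
    exact minv hb B hBcard hBdisj (hpres g hg) α₀
  -- any two elements of C₁ have equal block multisets
  have msN : ∀ γ ∈ nbrs C 1, ∀ γ' ∈ nbrs C 1,
      (Finset.univ.val.map fun i => (γ.1 ∩ B i).card) =
        (Finset.univ.val.map fun i => (γ'.1 ∩ B i).card) := by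
    intro γ hγ γ' hγ'
    obtain ⟨g, hg, hgγ⟩ := h1 γ hγ γ' hγ'
    rw [← hgγ]
    exact (minv hb B hBcard hBdisj (hpres g hg) γ).symm
  have hblk : ∀ y : Ω, ∃ i, y ∈ B i := by
    intro y
    have : y ∈ Finset.univ.biUnion B := hBcover ▸ Finset.mem_univ y
    simpa [Finset.mem_biUnion] using this
  have hcomplα : (Finset.univ \ α₀.1).card = k + 1 := by
    rw [Finset.card_sdiff_of_subset (Finset.subset_univ _), Finset.card_univ, hcard, α₀.2]
    omega
  have gvert : ∀ y, y ∉ α₀.1 → ((Finset.univ \ α₀.1).erase y).card = k := by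
    intro y hy
    rw [Finset.card_erase_of_mem (Finset.mem_sdiff.mpr ⟨Finset.mem_univ _, hy⟩), hcomplα]
    omega
  have gadj : ∀ y (hy : y ∉ α₀.1),
      (kneser Ω k).Adj α₀ ⟨(Finset.univ \ α₀.1).erase y, gvert y hy⟩ := by
    intro y hy
    apply kneser_adj_of_disjoint (by omega)
    rw [Finset.disjoint_right]
    intro x hx
    have := (Finset.erase_subset _ _) hx
    rw [Finset.mem_sdiff] at this
    exact this.2
  have gms : ∀ (i : Fin a) y, y ∉ α₀.1 → y ∈ B i →
      (Finset.univ.val.map fun j => (((Finset.univ \ α₀.1).erase y) ∩ B j).card)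
        = ((b - m i) - 1) ::ₘ W.erase (b - m i) :=
    fun i y hy hyB => nbr_multiset B hBcard hBdisj α₀.1 i y hyB hy
  -- δ = 1 at α₀
  have hδ : ∃ β ∈ C, (kneser Ω k).Adj α₀ β := by
    obtain ⟨α', hα', β', hβ', hadj⟩ := hdelta
    obtain ⟨g, hg, hgα⟩ := h0 α' hα' α₀ hα₀
    exact ⟨permV g β', permV_memC hg hβ', hgα ▸ permV_adj hadj⟩
  obtain ⟨β₀, hβ₀C, hβ₀adj⟩ := hδ
  have hβsub : β₀.1 ⊆ Finset.univ \ α₀.1 := by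
    intro x hx
    rw [Finset.mem_sdiff]
    exact ⟨Finset.mem_univ _, Finset.disjoint_right.mp (And.right hβ₀adj) hx⟩
  have hDcard : ((Finset.univ \ α₀.1) \ β₀.1).card = 1 := by
    rw [Finset.card_sdiff_of_subset hβsub, hcomplα, β₀.2]
    omega
  obtain ⟨y₀, hy₀⟩ := Finset.card_eq_one.mp hDcard
  have hy₀mem : y₀ ∈ (Finset.univ \ α₀.1) \ β₀.1 := hy₀ ▸ Finset.mem_singleton_self y₀
  have hy₀α : y₀ ∉ α₀.1 := (Finset.mem_sdiff.mp (Finset.mem_sdiff.mp hy₀mem).1).2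
  have hβeq : β₀.1 = (Finset.univ \ α₀.1).erase y₀ := by
    apply Finset.eq_of_subset_of_card_le
    · intro x hx
      rw [Finset.mem_erase]
      refine ⟨fun h => (Finset.mem_sdiff.mp hy₀mem).2 (h ▸ hx), hβsub hx⟩
    · rw [gvert y₀ hy₀α, β₀.2]
  obtain ⟨i₀, hi₀⟩ := hblk y₀
  have hmi₀ : m i₀ < b := by
    rcases lt_or_eq_of_le (hmle i₀) with h | h
    · exact h
    · exfalso
      have hmm : m i₀ = (α₀.1 ∩ B i₀).card := rfl
      have hsub : α₀.1 ∩ B i₀ = B i₀ :=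
        Finset.eq_of_subset_of_card_le Finset.inter_subset_right (by rw [hBcard i₀]; omega)
      rw [← hsub] at hi₀
      exact hy₀α (Finset.mem_inter.mp hi₀).1
  have H1 : ∃ v ∈ W, 0 < v ∧ (v - 1) ::ₘ W.erase v = M := by
    refine ⟨b - m i₀, ?_, by omega, ?_⟩
    · rw [hW]
      exact Multiset.mem_map.mpr ⟨i₀, Finset.mem_val.mpr (Finset.mem_univ i₀), rfl⟩
    · have h1 := gms i₀ y₀ hy₀α hi₀
      rw [← hβeq] at h1
      rw [← h1]
      exact msC β₀ hβ₀C
  have pickp : ∀ i : Fin a, m i < b → ∃ y, y ∈ B i ∧ y ∉ α₀.1 := by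
    intro i hi
    by_contra h
    push_neg at h
    have hsub : B i ⊆ α₀.1 ∩ B i := fun x hx => Finset.mem_inter.mpr ⟨h x hx, hx⟩
    have hle := Finset.card_le_card hsub
    rw [hBcard i] at hle
    have hmm : m i = (α₀.1 ∩ B i).card := rfl
    omega
  have H2 : ∀ v ∈ W, ∀ v' ∈ W, 0 < v → 0 < v' → (v - 1) ::ₘ W.erase v ≠ M →
      (v' - 1) ::ₘ W.erase v' ≠ M →
      (v - 1) ::ₘ W.erase v = (v' - 1) ::ₘ W.erase v' := by
    intro v hv v' hv' hv0 hv'0 hvM hv'M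
    rw [hW] at hv hv'
    obtain ⟨i, _, hiv⟩ := Multiset.mem_map.mp hv
    obtain ⟨i', _, hiv'⟩ := Multiset.mem_map.mp hv'
    subst hiv hiv'
    have hmi : m i < b := by omega
    have hmi' : m i' < b := by omega
    obtain ⟨y, hyB, hyα⟩ := pickp i hmi
    obtain ⟨y', hyB', hyα'⟩ := pickp i' hmi'
    set γ : KVert Ω k := ⟨(Finset.univ \ α₀.1).erase y, gvert y hyα⟩ with hγ
    set γ' : KVert Ω k := ⟨(Finset.univ \ α₀.1).erase y', gvert y' hyα'⟩ with hγ'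
    have hγms : (Finset.univ.val.map fun j => (γ.1 ∩ B j).card)
        = ((b - m i) - 1) ::ₘ W.erase (b - m i) := gms i y hyα hyB
    have hγms' : (Finset.univ.val.map fun j => (γ'.1 ∩ B j).card)
        = ((b - m i') - 1) ::ₘ W.erase (b - m i') := gms i' y' hyα' hyB'
    have hγC : γ ∉ C := fun hc => hvM (hγms.symm.trans (msC γ hc))
    have hγC' : γ' ∉ C := fun hc => hv'M (hγms'.symm.trans (msC γ' hc))
    have hγ1 : γ ∈ nbrs C 1 := mem_nbrs1 hcard (by omega) C hγC hα₀ (gadj y hyα)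
    have hγ1' : γ' ∈ nbrs C 1 := mem_nbrs1 hcard (by omega) C hγC' hα₀ (gadj y' hyα')
    have h := msN γ hγ1 γ' hγ1'
    rw [hγms, hγms'] at h
    exact h
  -- sum of block intersections is k
  have hcover' : α₀.1 = Finset.univ.biUnion (fun i => α₀.1 ∩ B i) := by
    ext x
    simp only [Finset.mem_biUnion, Finset.mem_inter, Finset.mem_univ, true_and]
    constructor
    · intro hx
      obtain ⟨i, hi⟩ := hblk x
      exact ⟨i, hx, hi⟩
    · rintro ⟨i, hx, _⟩
      exact hx
  have hdisj' : ∀ i ∈ Finset.univ, ∀ j ∈ Finset.univ, i ≠ j →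
      Disjoint (α₀.1 ∩ B i) (α₀.1 ∩ B j) := by
    intro i _ j _ hij
    rw [Finset.disjoint_left]
    intro x hx hx'
    exact Finset.disjoint_left.mp (hBdisj i j hij) (Finset.mem_inter.mp hx).2
      (Finset.mem_inter.mp hx').2
  have hsumg : (∑ i, m i) = k := by
    have h1 := Finset.card_biUnion hdisj'
    rw [← hcover', α₀.2] at h1
    exact h1.symm
  have hWcard : Multiset.card W = a := by
    rw [hW]
    simp
  have hWle : ∀ x ∈ W, x ≤ b := by
    intro x hx
    rw [hW] at hx
    obtain ⟨i, _, rfl⟩ := Multiset.mem_map.mp hx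
    omega
  have hMdef : M = W.map (b - ·) := by
    rw [hW, hMs, Multiset.map_map]
    apply Multiset.map_congr rfl
    intro i _
    simp only [Function.comp_apply]
    have := hmle i
    omega
  have hWsum : W.sum = k + 1 := by
    have h1 : (∑ i, (b - m i)) + (∑ i, m i) = ∑ _i : Fin a, b := by
      rw [← Finset.sum_add_distrib]
      apply Finset.sum_congr rfl
      intro i _
      have := hmle i
      omega
    have h2 : (∑ _i : Fin a, b) = a * b := by
      rw [Finset.sum_const, Finset.card_univ, Fintype.card_fin, smul_eq_mul]
    have h3 : W.sum = ∑ i, (b - m i) := rfl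
    omega
  rcases core haodd hbodd (by omega) (by omega) hab W M hWcard hWle hMdef hWsum H1 H2 with h | h
  · exact Or.inl (fun α hα => (msC α hα).trans h)
  · exact Or.inr (fun α hα => (msC α hα).trans h)
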